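/- The truncation error t = (L^{qcf} − L^a) u^a satisfies the negative-norm estimate ‖t‖_* ≤ 2 ε^2 |φ''_{2F}| ‖D^3 u^a‖_{ℓ^∞(C̃)}, where ‖t‖_* = sup{ ⟨t, w⟩ : w ∈ V_0, ‖Dw‖_{ℓ^1_ε} = 1 } and C̃ = {−N+2,...,−K+1} ∪ {K+2,...,N+1}. -/

import Mathlib

noncomputable def eps (N : ℤ) : ℝ := 1 / (N : ℝ)

noncomputable def Dd (N : ℤ) (v : ℤ → ℝ) (j : ℤ) : ℝ := (v j - v (j-1)) / eps N

/-- Third backward divided difference. -/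
noncomputable def D3 (N : ℤ) (v : ℤ → ℝ) (j : ℤ) : ℝ :=
  (Dd N v j - 2 * Dd N v (j-1) + Dd N v (j-2)) / (eps N)^2

/-- Linearized atomistic operator. -/
noncomputable def Laop (N : ℤ) (φF φ2F : ℝ) (v : ℤ → ℝ) (j : ℤ) : ℝ :=
  φF * ((-v (j+1) + 2 * v j - v (j-1)) / (eps N)^2) +
  φ2F * ((-v (j+2) + 2 * v j - v (j-2)) / (eps N)^2)

/-- Linearized force-based QC operator. -/
noncomputable def LqcfOp (N K : ℤ) (φF φ2F : ℝ) (v : ℤ → ℝ) (j : ℤ) : ℝ :=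
  if -K ≤ j ∧ j ≤ K then Laop N φF φ2F v j
  else (φF + 4 * φ2F) * ((-v (j+1) + 2 * v j - v (j-1)) / (eps N)^2)

/-- Truncation error `t = (L^{qcf} - L^a)u^a` (zero at the boundary). -/
noncomputable def truncErr (N K : ℤ) (φF φ2F : ℝ) (u : ℤ → ℝ) (j : ℤ) : ℝ :=
  if -N+1 ≤ j ∧ j ≤ N-1 then LqcfOp N K φF φ2F u j - Laop N φF φ2F u j else 0

lemma Icc_insert_top (a b : ℤ) (h : a ≤ b + 1) :
    insert (b+1) (Finset.Icc a b) = Finset.Icc a (b+1) := by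
  ext x; simp [Finset.mem_Icc]; omega

lemma tele (g : ℤ → ℝ) (a b : ℤ) (h : a ≤ b + 1) :
    ∑ j ∈ Finset.Icc a b, (g (j+1) - g j) = g (b+1) - g a := by
  have h' : a - 1 ≤ b := by omega
  clear h
  refine Int.le_induction (m := a-1)
    (motive := fun b _ => ∑ j ∈ Finset.Icc a b, (g (j+1) - g j) = g (b+1) - g a) ?_ ?_ b h'
  · show ∑ j ∈ Finset.Icc a (a-1), (g (j+1) - g j) = g (a-1+1) - g a
    rw [Finset.Icc_eq_empty (by omega)]
    simp [show a - 1 + 1 = a by ring]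
  · intro b hb ih
    show ∑ j ∈ Finset.Icc a (b+1), (g (j+1) - g j) = g (b+1+1) - g a
    rw [← Icc_insert_top a b (by omega), Finset.sum_insert (by simp [Finset.mem_Icc])]
    rw [ih]
    ring

lemma tele2 (w : ℤ → ℝ) (a b : ℤ) (h : a ≤ b + 1) :
    ∑ i ∈ Finset.Icc a b, (w i - w (i-1)) = w b - w (a-1) := by
  have h2 := tele (fun i => w (i-1)) a b h
  simp only [show ∀ i : ℤ, i + 1 - 1 = i from fun i => by ring] at h2
  exact h2

lemma swapL (a b : ℤ) (f δ : ℤ → ℝ) :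
    ∑ j ∈ Finset.Icc a b, f j * (∑ i ∈ Finset.Icc a j, δ i)
      = ∑ i ∈ Finset.Icc a b, δ i * (∑ j ∈ Finset.Icc i b, f j) := by
  simp_rw [Finset.mul_sum]
  rw [Finset.sum_comm' (t := fun j => Finset.Icc a j) (t' := Finset.Icc a b)
    (s' := fun i => Finset.Icc i b)]
  · exact Finset.sum_congr rfl (fun i _ => Finset.sum_congr rfl (fun j _ => mul_comm _ _))
  · intro x y; simp [Finset.mem_Icc]; omega

lemma swapR (c N : ℤ) (f δ : ℤ → ℝ) :
    ∑ j ∈ Finset.Icc c (N-1), f j * (∑ i ∈ Finset.Icc (j+1) N, δ i)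
      = ∑ i ∈ Finset.Icc (c+1) N, δ i * (∑ j ∈ Finset.Icc c (i-1), f j) := by
  simp_rw [Finset.mul_sum]
  rw [Finset.sum_comm' (t := fun j => Finset.Icc (j+1) N) (t' := Finset.Icc (c+1) N)
    (s' := fun i => Finset.Icc c (i-1))]
  · exact Finset.sum_congr rfl (fun i _ => Finset.sum_congr rfl (fun j _ => mul_comm _ _))
  · intro x y; simp [Finset.mem_Icc]; omega

lemma tval (N K : ℤ) (hN : 1 ≤ N) (φF φ2F : ℝ) (u : ℤ → ℝ) (j : ℤ)
    (h1 : -N+1 ≤ j) (h2 : j ≤ N-1) (h3 : ¬(-K ≤ j ∧ j ≤ K)) :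
    truncErr N K φF φ2F u j
      = φ2F * eps N * (D3 N u (j+2) - D3 N u (j+1)) := by
  have hNne : (N:ℝ) ≠ 0 := by
    have : N ≠ 0 := by omega
    exact_mod_cast this
  unfold truncErr LqcfOp Laop D3 Dd eps
  rw [if_pos ⟨h1, h2⟩, if_neg h3]
  simp only [show j+2-1 = j+1 from by ring, show j+2-2 = j from by ring,
    show j+1-1 = j from by ring, show j+1-2 = j-1 from by ring,
    show j-1-1 = j-2 from by ring]
  field_simp
  ring

/-- Negative-norm estimate for the truncation error:
`‖t‖_* ≤ 2 ε² |φ''_{2F}| ‖D³u^a‖_{ℓ∞(C̃)}`, where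
`C̃ = {-N+2,…,-K+1} ∪ {K+2,…,N+1}`. -/
theorem qcf_truncation_negnorm (N K : ℤ) (hN : 1 ≤ N) (hK : 2 ≤ K) (hKN : 2 * K ≤ N)
    (φF φ2F : ℝ) (u : ℤ → ℝ)
    (hneCt : ((Finset.Icc (-N+2) (-K+1)) ∪ (Finset.Icc (K+2) (N+1))).Nonempty) :
    sSup { x : ℝ | ∃ w : ℤ → ℝ, w (-N) = 0 ∧ w N = 0 ∧
        eps N * ∑ j ∈ Finset.Icc (-N+1) N, |Dd N w j| = 1 ∧
        x = eps N * ∑ j ∈ Finset.Icc (-N) N, truncErr N K φF φ2F u j * w j } ≤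
      2 * (eps N)^2 * |φ2F| *
        ((Finset.Icc (-N+2) (-K+1)) ∪ (Finset.Icc (K+2) (N+1))).sup' hneCt
          (fun j => |D3 N u j|) := by
  set Ct := (Finset.Icc (-N+2) (-K+1)) ∪ (Finset.Icc (K+2) (N+1)) with hCt
  set M := Ct.sup' hneCt (fun j => |D3 N u j|) with hMdef
  have hNpos : (0:ℝ) < (N:ℝ) := by exact_mod_cast (by omega : (0:ℤ) < N)
  have hε : 0 < eps N := by unfold eps; positivity
  have hεne : eps N ≠ 0 := ne_of_gt hε
  have hMb : ∀ j ∈ Ct, |D3 N u j| ≤ M := fun j hj => Finset.le_sup' (fun j => |D3 N u j|) hj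
  have hM0 : 0 ≤ M := le_trans (abs_nonneg _) (hMb _ hneCt.choose_spec)
  have hRHS0 : 0 ≤ 2 * (eps N)^2 * |φ2F| * M := by
    apply mul_nonneg _ hM0; positivity
  apply Real.sSup_le _ hRHS0
  rintro x ⟨w, hw0, hwN, hnorm, rfl⟩
  -- abbreviations
  set t : ℤ → ℝ := truncErr N K φF φ2F u with htdef
  set g : ℤ → ℝ := fun j => φ2F * eps N * D3 N u (j+1) with hgdef
  have hδ : ∀ i : ℤ, |w i - w (i-1)| = eps N * |Dd N w i| := by
    intro i
    unfold Dd
    rw [abs_div, abs_of_pos hε]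
    field_simp
  have hgbL : ∀ i ∈ Finset.Icc (-N+1) (-K-1), |g (-K-1+1) - g i| ≤ |φ2F| * eps N * (2*M) := by
    intro i hi
    simp only [Finset.mem_Icc] at hi
    have h1 : (-K+1) ∈ Ct := by
      simp only [hCt, Finset.mem_union, Finset.mem_Icc]; left; omega
    have h2 : (i+1) ∈ Ct := by
      simp only [hCt, Finset.mem_union, Finset.mem_Icc]; left; omega
    have : g (-K-1+1) - g i = φ2F * eps N * (D3 N u (-K+1) - D3 N u (i+1)) := by
      simp only [hgdef, show (-K-1+1)+1 = -K+1 from by ring]; ring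
    rw [this, abs_mul, abs_mul, abs_of_pos hε]
    have := hMb _ h1
    have := hMb _ h2
    have habs : |D3 N u (-K+1) - D3 N u (i+1)| ≤ 2*M := by
      calc |D3 N u (-K+1) - D3 N u (i+1)| ≤ |D3 N u (-K+1)| + |D3 N u (i+1)| := abs_sub _ _
        _ ≤ 2*M := by linarith
    exact mul_le_mul_of_nonneg_left habs (by positivity)
  have hgbR : ∀ i ∈ Finset.Icc (K+2) N, |g i - g (K+1)| ≤ |φ2F| * eps N * (2*M) := by
    intro i hi
    simp only [Finset.mem_Icc] at hi
    have h1 : (i+1) ∈ Ct := by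
      simp only [hCt, Finset.mem_union, Finset.mem_Icc]; right; omega
    have h2 : (K+2) ∈ Ct := by
      simp only [hCt, Finset.mem_union, Finset.mem_Icc]; right; omega
    have : g i - g (K+1) = φ2F * eps N * (D3 N u (i+1) - D3 N u (K+2)) := by
      simp only [hgdef, show (K+1)+1 = K+2 from by ring]; ring
    rw [this, abs_mul, abs_mul, abs_of_pos hε]
    have := hMb _ h1
    have := hMb _ h2
    have habs : |D3 N u (i+1) - D3 N u (K+2)| ≤ 2*M := by
      calc |D3 N u (i+1) - D3 N u (K+2)| ≤ |D3 N u (i+1)| + |D3 N u (K+2)| := abs_sub _ _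
        _ ≤ 2*M := by linarith
    exact mul_le_mul_of_nonneg_left habs (by positivity)
  -- t j rewritten via g
  have htg : ∀ j, -N+1 ≤ j → j ≤ N-1 → ¬(-K ≤ j ∧ j ≤ K) → t j = g (j+1) - g j := by
    intro j h1 h2 h3
    rw [htdef, tval N K hN φF φ2F u j h1 h2 h3, hgdef]
    simp only [show j+1+1 = j+2 from by ring]
    ring
  -- split the sum
  have hdisj : Disjoint (Finset.Icc (-N+1) (-K-1)) (Finset.Icc (K+1) (N-1)) := by
    rw [Finset.disjoint_left]
    intro x hx hx2
    simp only [Finset.mem_Icc] at hx hx2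
    omega
  have hsub : Finset.Icc (-N+1) (-K-1) ∪ Finset.Icc (K+1) (N-1) ⊆ Finset.Icc (-N) N := by
    intro x hx
    simp only [Finset.mem_union, Finset.mem_Icc] at hx ⊢
    omega
  have ht0 : ∀ j ∈ Finset.Icc (-N) N,
      j ∉ Finset.Icc (-N+1) (-K-1) ∪ Finset.Icc (K+1) (N-1) → t j * w j = 0 := by
    intro j hj hnj
    simp only [Finset.mem_Icc] at hj
    simp only [Finset.mem_union, Finset.mem_Icc] at hnj
    rw [htdef]
    unfold truncErr
    by_cases h1 : -N+1 ≤ j ∧ j ≤ N-1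
    · rw [if_pos h1]
      have hk : -K ≤ j ∧ j ≤ K := by omega
      unfold LqcfOp
      rw [if_pos hk]
      ring
    · rw [if_neg h1]; ring
  have hsplit : ∑ j ∈ Finset.Icc (-N) N, t j * w j
      = (∑ j ∈ Finset.Icc (-N+1) (-K-1), t j * w j)
        + (∑ j ∈ Finset.Icc (K+1) (N-1), t j * w j) := by
    rw [← Finset.sum_union hdisj]
    exact (Finset.sum_subset hsub ht0).symm
  -- left block
  have hLeq : ∑ j ∈ Finset.Icc (-N+1) (-K-1), t j * w j
      = ∑ i ∈ Finset.Icc (-N+1) (-K-1),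
          (w i - w (i-1)) * (g (-K-1+1) - g i) := by
    have step : ∀ j ∈ Finset.Icc (-N+1) (-K-1),
        t j * w j = (g (j+1) - g j) * (∑ i ∈ Finset.Icc (-N+1) j, (w i - w (i-1))) := by
      intro j hj
      simp only [Finset.mem_Icc] at hj
      rw [htg j (by omega) (by omega) (by omega)]
      congr 1
      rw [tele2 w (-N+1) j (by omega)]
      rw [show (-N+1-1 : ℤ) = -N from by ring, hw0]
      ring
    rw [Finset.sum_congr rfl step, swapL]
    refine Finset.sum_congr rfl (fun i hi => ?_)
    simp only [Finset.mem_Icc] at hi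
    rw [tele g i (-K-1) (by omega)]
  -- right block
  have hReq : ∑ j ∈ Finset.Icc (K+1) (N-1), t j * w j
      = -∑ i ∈ Finset.Icc (K+2) N,
          (w i - w (i-1)) * (g i - g (K+1)) := by
    have step : ∀ j ∈ Finset.Icc (K+1) (N-1),
        t j * w j = (g (j+1) - g j) * (-(∑ i ∈ Finset.Icc (j+1) N, (w i - w (i-1)))) := by
      intro j hj
      simp only [Finset.mem_Icc] at hj
      rw [htg j (by omega) (by omega) (by omega)]
      congr 1
      rw [tele2 w (j+1) N (by omega)]
      rw [show (j+1-1 : ℤ) = j from by ring, hwN]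
      ring
    rw [Finset.sum_congr rfl step]
    have hpull : ∑ j ∈ Finset.Icc (K+1) (N-1),
        (g (j+1) - g j) * (-(∑ i ∈ Finset.Icc (j+1) N, (w i - w (i-1))))
        = -∑ j ∈ Finset.Icc (K+1) (N-1),
            (g (j+1) - g j) * (∑ i ∈ Finset.Icc (j+1) N, (w i - w (i-1))) := by
      rw [← Finset.sum_neg_distrib]
      exact Finset.sum_congr rfl (fun j _ => by ring)
    rw [hpull, swapR]
    rw [show (K+1+1 : ℤ) = K+2 from by ring]
    congr 1
    refine Finset.sum_congr rfl (fun i hi => ?_)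
    simp only [Finset.mem_Icc] at hi
    rw [tele g (K+1) (i-1) (by omega), show (i-1)+1 = i from by ring]
  -- bounds for each block
  have hLb : |∑ j ∈ Finset.Icc (-N+1) (-K-1), t j * w j|
      ≤ (|φ2F| * eps N * (2*M)) * ∑ i ∈ Finset.Icc (-N+1) (-K-1), eps N * |Dd N w i| := by
    rw [hLeq, Finset.mul_sum]
    refine (Finset.abs_sum_le_sum_abs _ _).trans (Finset.sum_le_sum (fun i hi => ?_))
    rw [abs_mul, hδ i]
    calc eps N * |Dd N w i| * |g (-K-1+1) - g i|
        ≤ eps N * |Dd N w i| * (|φ2F| * eps N * (2*M)) :=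
          mul_le_mul_of_nonneg_left (hgbL i hi) (by positivity)
      _ = |φ2F| * eps N * (2*M) * (eps N * |Dd N w i|) := by ring
  have hRb : |∑ j ∈ Finset.Icc (K+1) (N-1), t j * w j|
      ≤ (|φ2F| * eps N * (2*M)) * ∑ i ∈ Finset.Icc (K+2) N, eps N * |Dd N w i| := by
    rw [hReq, abs_neg, Finset.mul_sum]
    refine (Finset.abs_sum_le_sum_abs _ _).trans (Finset.sum_le_sum (fun i hi => ?_))
    rw [abs_mul, hδ i]
    calc eps N * |Dd N w i| * |g i - g (K+1)|
        ≤ eps N * |Dd N w i| * (|φ2F| * eps N * (2*M)) :=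
          mul_le_mul_of_nonneg_left (hgbR i hi) (by positivity)
      _ = |φ2F| * eps N * (2*M) * (eps N * |Dd N w i|) := by ring
  -- the weighted difference sums add up to at most 1
  have hfull : ∑ i ∈ Finset.Icc (-N+1) N, eps N * |Dd N w i| = 1 := by
    rw [← Finset.mul_sum]
    exact hnorm
  have hdisj2 : Disjoint (Finset.Icc (-N+1) (-K-1)) (Finset.Icc (K+2) N) := by
    rw [Finset.disjoint_left]
    intro x hx hx2
    simp only [Finset.mem_Icc] at hx hx2
    omega
  have hsum1 : (∑ i ∈ Finset.Icc (-N+1) (-K-1), eps N * |Dd N w i|)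
      + (∑ i ∈ Finset.Icc (K+2) N, eps N * |Dd N w i|) ≤ 1 := by
    rw [← Finset.sum_union hdisj2, ← hfull]
    refine Finset.sum_le_sum_of_subset_of_nonneg ?_ (fun i _ _ => by positivity)
    intro x hx
    simp only [Finset.mem_union, Finset.mem_Icc] at hx ⊢
    omega
  -- combine
  calc eps N * ∑ j ∈ Finset.Icc (-N) N, t j * w j
      ≤ |eps N * ∑ j ∈ Finset.Icc (-N) N, t j * w j| := le_abs_self _
    _ = eps N * |∑ j ∈ Finset.Icc (-N) N, t j * w j| := by
        rw [abs_mul, abs_of_pos hε]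
    _ ≤ eps N * (|∑ j ∈ Finset.Icc (-N+1) (-K-1), t j * w j|
          + |∑ j ∈ Finset.Icc (K+1) (N-1), t j * w j|) := by
        rw [hsplit]
        exact mul_le_mul_of_nonneg_left (abs_add_le _ _) hε.le
    _ ≤ eps N * ((|φ2F| * eps N * (2*M)) * ∑ i ∈ Finset.Icc (-N+1) (-K-1), eps N * |Dd N w i|
          + (|φ2F| * eps N * (2*M)) * ∑ i ∈ Finset.Icc (K+2) N, eps N * |Dd N w i|) :=
        mul_le_mul_of_nonneg_left (add_le_add hLb hRb) hε.le
    _ = eps N * (|φ2F| * eps N * (2*M)) * ((∑ i ∈ Finset.Icc (-N+1) (-K-1), eps N * |Dd N w i|)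
          + (∑ i ∈ Finset.Icc (K+2) N, eps N * |Dd N w i|)) := by ring
    _ ≤ eps N * (|φ2F| * eps N * (2*M)) * 1 :=
        mul_le_mul_of_nonneg_left hsum1 (by positivity)
    _ = 2 * (eps N)^2 * |φ2F| * M := by ring
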